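/- Let G be a group equipped with a ternary operation t : G × G × G → G which is a homomorphism of groups (i.e. t(x₁*x₂, y₁*y₂, z₁*z₂) = t(x₁,y₁,z₁) * t(x₂,y₂,z₂) for all arguments) and satisfies the Mal'cev identities t(x,x,y) = y and t(x,y,y) = x for all x, y ∈ G. Then G is commutative. -/
import Mathlib

/-- Every group object in herds is abelian: a group `G` with a ternary operation `t`
which is a group homomorphism `G³ → G` and satisfies the Mal'cev identities is commutative. -/
theorem stmt_0 {G : Type*} [Group G] (t : G → G → G → G)
    (hhom : ∀ x₁ x₂ y₁ y₂ z₁ z₂ : G,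
      t (x₁ * x₂) (y₁ * y₂) (z₁ * z₂) = t x₁ y₁ z₁ * t x₂ y₂ z₂)
    (h1 : ∀ x y : G, t x x y = y)
    (h2 : ∀ x y : G, t x y y = x) :
    ∀ a b : G, a * b = b * a := by
  intro a b
  have e1 : t a 1 b = a * b := by
    have := hhom a 1 1 1 1 b
    simpa [h1, h2] using this
  have e2 : t a 1 b = b * a := by
    have := hhom 1 a 1 1 b 1
    simpa [h1, h2] using this
  rw [← e1, e2]
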